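/- Let n ≤ 3 and m ≥ 1. Let f₁,…,f_P and g be homogeneous polynomials of degree m in ℂ[z₁,…,zₙ] such that {f₁,…,f_P, g} is linearly independent over ℂ. Let I⁺ = ⟨f₁,…,f_P⟩ and I⁻ = ⟨g⟩. If the degree-(m+1) homogeneous component of I⁻ is contained in the degree-(m+1) homogeneous component of I⁺ (equivalently, z_j·g ∈ I⁺ for every j = 1,…,n), then P ≥ n. -/

import Mathlib

open MvPolynomial

namespace AlgSig

noncomputable section

variable {σ : Type*}

/-- The map `p(z) ↦ p(t·z)` into `(MvPolynomial σ ℂ)[t]`. -/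
noncomputable def psi : MvPolynomial σ ℂ →ₐ[ℂ] Polynomial (MvPolynomial σ ℂ) :=
  aeval (fun i => Polynomial.C (X i) * Polynomial.X)

lemma psi_monomial (d : σ →₀ ℕ) (c : ℂ) :
    psi (monomial d c) = Polynomial.monomial d.degree (monomial d c) := by
  rw [psi, aeval_monomial]
  have h1 : (d.prod fun i k => (Polynomial.C (X i : MvPolynomial σ ℂ) * Polynomial.X) ^ k)
      = Polynomial.C (d.prod fun i k => (X i) ^ k) * Polynomial.X ^ d.degree := by
    rw [Finsupp.prod]
    simp_rw [mul_pow]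
    rw [Finset.prod_mul_distrib]
    congr 1
    · rw [Finsupp.prod, map_prod]
      simp_rw [map_pow]
    · rw [Finset.prod_pow_eq_pow_sum]
      rfl
  rw [h1, ← Polynomial.C_mul_X_pow_eq_monomial]
  have h2 : algebraMap ℂ (Polynomial (MvPolynomial σ ℂ)) c = Polynomial.C (C c) := by
    rw [← MvPolynomial.algebraMap_eq]
    rfl
  rw [h2, monomial_eq, map_mul]
  ring

lemma coeff_psi (p : MvPolynomial σ ℂ) (k : ℕ) :
    (psi p).coeff k = homogeneousComponent k p := by
  induction p using MvPolynomial.induction_on' with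
  | monomial d c =>
    rw [psi_monomial, Polynomial.coeff_monomial,
      homogeneousComponent_of_mem ((mem_homogeneousSubmodule _ _).mpr
        (isHomogeneous_monomial c rfl))]
    by_cases h : k = d.degree
    · simp [h]
    · simp [h, Ne.symm h]
  | add p q hp hq => simp [map_add, hp, hq]

lemma psi_eq_monomial {p : MvPolynomial σ ℂ} {n : ℕ} (hp : p.IsHomogeneous n) :
    psi p = Polynomial.monomial n p := by
  ext k
  rw [coeff_psi, Polynomial.coeff_monomial,
    homogeneousComponent_of_mem ((mem_homogeneousSubmodule _ _).mpr hp)]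
  by_cases h : k = n
  · simp [h]
  · simp [h, Ne.symm h]

lemma psi_ne_zero {p : MvPolynomial σ ℂ} (hp : p ≠ 0) : psi p ≠ 0 := by
  intro h
  apply hp
  have hsum := sum_homogeneousComponent (φ := p)
  rw [← hsum]
  apply Finset.sum_eq_zero
  intro i _
  rw [← coeff_psi, h, Polynomial.coeff_zero]

/-- Factors of a homogeneous polynomial are homogeneous. -/
lemma isHomogeneous_of_mul {a b : MvPolynomial σ ℂ} {n : ℕ}
    (h : (a * b).IsHomogeneous n) (ha : a ≠ 0) (hb : b ≠ 0) :
    ∃ da db, da + db = n ∧ a.IsHomogeneous da ∧ b.IsHomogeneous db := by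
  classical
  have hab : a * b ≠ 0 := mul_ne_zero ha hb
  have hA := psi_ne_zero ha
  have hB := psi_ne_zero hb
  have hmul : psi a * psi b = Polynomial.monomial n (a * b) := by
    rw [← map_mul, psi_eq_monomial h]
  have hd : (psi a).natDegree + (psi b).natDegree = n := by
    rw [← Polynomial.natDegree_mul hA hB, hmul, Polynomial.natDegree_monomial, if_neg hab]
  have ht : (psi a).natTrailingDegree + (psi b).natTrailingDegree = n := by
    rw [← Polynomial.natTrailingDegree_mul hA hB, hmul, Polynomial.natTrailingDegree_monomial hab]
  have hta := Polynomial.natTrailingDegree_le_natDegree (psi a)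
  have htb := Polynomial.natTrailingDegree_le_natDegree (psi b)
  have key : ∀ c : MvPolynomial σ ℂ, c ≠ 0 →
      (psi c).natTrailingDegree = (psi c).natDegree →
      c.IsHomogeneous ((psi c).natDegree) := by
    intro c hc htc d hdc
    have h1 : coeff d (homogeneousComponent d.degree c) ≠ 0 := by
      rw [coeff_homogeneousComponent, if_pos rfl]; exact hdc
    have h2 : (psi c).coeff d.degree ≠ 0 := by
      rw [coeff_psi]
      intro h0
      rw [h0] at h1
      simp at h1
    have h3 := Polynomial.le_natDegree_of_ne_zero h2
    have h4 := Polynomial.natTrailingDegree_le_of_ne_zero h2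
    rw [show (Finsupp.weight 1 : (σ →₀ ℕ) →+ ℕ) = Finsupp.degree from
      Finsupp.degree_eq_weight_one.symm]
    omega
  exact ⟨_, _, hd, key a ha (by omega), key b hb (by omega)⟩

lemma homogeneousComponent_mul_of_isHomogeneous {h f : MvPolynomial σ ℂ} {m : ℕ}
    (hf : f.IsHomogeneous m) :
    homogeneousComponent (1 + m) (h * f) = homogeneousComponent 1 h * f := by
  have hc := coeff_psi (h * f) (1 + m)
  rw [map_mul, psi_eq_monomial hf] at hc
  rw [← hc, Polynomial.coeff_mul_monomial, coeff_psi]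

variable {σ : Type*}

lemma eq_C_of_isHomogeneous_zero {c : MvPolynomial σ ℂ} (h0 : c.IsHomogeneous 0) :
    c = C (coeff 0 c) := by
  have h := homogeneousComponent_of_mem (m := 0) ((mem_homogeneousSubmodule _ _).mpr h0)
  rw [if_pos rfl, homogeneousComponent_zero] at h
  exact h.symm

lemma isUnit_C' {c : ℂ} (hc : c ≠ 0) : IsUnit (C c : MvPolynomial σ ℂ) :=
  isUnit_iff_exists_inv.mpr ⟨C c⁻¹, by rw [← map_mul, mul_inv_cancel₀ hc, map_one]⟩

lemma prime_X_c (i : σ) : Prime (X i : MvPolynomial σ ℂ) := by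
  rw [← UniqueFactorizationMonoid.irreducible_iff_prime]
  constructor
  · intro hu
    obtain ⟨q, hq⟩ := hu.exists_right_inv
    have hqne : q ≠ 0 := by rintro rfl; simp at hq
    have h1 : IsHomogeneous ((X i : MvPolynomial σ ℂ) * q) 0 := by
      rw [hq]; exact isHomogeneous_one σ ℂ
    obtain ⟨da, db, hsum, hXa, -⟩ := isHomogeneous_of_mul h1 (X_ne_zero i) hqne
    have := hXa.inj_right (isHomogeneous_X ℂ i) (X_ne_zero i)
    omega
  · intro a b hab
    have habne : a * b ≠ 0 := by rw [← hab]; exact X_ne_zero i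
    have hane : a ≠ 0 := fun h => habne (by rw [h, zero_mul])
    have hbne : b ≠ 0 := fun h => habne (by rw [h, mul_zero])
    have hh : (a * b).IsHomogeneous 1 := by rw [← hab]; exact isHomogeneous_X ℂ i
    obtain ⟨da, db, hsum, hha, hhb⟩ := isHomogeneous_of_mul hh hane hbne
    have hCu : ∀ c : MvPolynomial σ ℂ, c ≠ 0 → c.IsHomogeneous 0 → IsUnit c := by
      intro c hc h0
      have hcc := eq_C_of_isHomogeneous_zero h0
      have : coeff 0 c ≠ 0 := fun h => hc (by rw [hcc, h, map_zero])
      rw [hcc]; exact isUnit_C' this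
    rcases (by omega : da = 0 ∨ db = 0) with h | h
    · exact Or.inl (hCu a hane (h ▸ hha))
    · exact Or.inr (hCu b hbne (h ▸ hhb))

lemma linear_div {l : MvPolynomial σ ℂ} (hl : l.IsHomogeneous 1) {i : σ}
    (h : (X i : MvPolynomial σ ℂ) ∣ l) : ∃ c : ℂ, l = C c * X i := by
  obtain ⟨t, rfl⟩ := h
  by_cases ht : t = 0
  · exact ⟨0, by simp [ht]⟩
  obtain ⟨da, db, hsum, hX, hT⟩ := isHomogeneous_of_mul hl (X_ne_zero i) ht
  have hda := hX.inj_right (isHomogeneous_X ℂ i) (X_ne_zero i)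
  have hdb : db = 0 := by omega
  have := eq_C_of_isHomogeneous_zero (hdb ▸ hT)
  refine ⟨coeff 0 t, ?_⟩
  conv_lhs => rw [this]
  ring

lemma not_X_dvd [DecidableEq σ] {i j k : σ} (hij : i ≠ j) (hik : i ≠ k)
    {α β : ℂ} (hα : α ≠ 0) :
    ¬ (X j : MvPolynomial σ ℂ) ∣ (C α * X i + C β * X k) := by
  rintro ⟨t, ht⟩
  have hc := congrArg (coeff (Finsupp.single i 1)) ht
  rw [coeff_add, coeff_C_mul, coeff_C_mul, coeff_X_mul'] at hc
  simp only [Finsupp.mem_support_iff, Finsupp.single_apply] at hc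
  rw [if_neg (by simp [hij]), coeff_X', if_pos rfl, coeff_X',
    if_neg (by simp [Finsupp.single_eq_single_iff, Ne.symm hik])] at hc
  simp at hc
  exact hα hc

lemma not_X_dvd_X [DecidableEq σ] {i j : σ} (hij : i ≠ j) :
    ¬ (X j : MvPolynomial σ ℂ) ∣ (X i : MvPolynomial σ ℂ) := by
  rintro ⟨t, ht⟩
  have hc := congrArg (coeff (Finsupp.single i 1)) ht
  rw [coeff_X_mul'] at hc
  simp only [Finsupp.mem_support_iff, Finsupp.single_apply] at hc
  rw [if_neg (by simp [hij]), coeff_X', if_pos rfl] at hc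
  simp at hc

lemma single_of_degree_one {d : σ →₀ ℕ} (hd : Finsupp.degree d = 1) :
    ∃ i, d = Finsupp.single i 1 := by
  classical
  have hne : d ≠ 0 := by rintro rfl; simp at hd
  obtain ⟨i, hi⟩ := Finsupp.support_nonempty_iff.mpr hne
  have hi1 : 1 ≤ d i := Nat.one_le_iff_ne_zero.mpr (Finsupp.mem_support_iff.mp hi)
  have hile : d i ≤ 1 := by
    rw [← hd]
    exact Finset.single_le_sum (f := fun a => d a) (fun _ _ => Nat.zero_le _) hi
  refine ⟨i, ?_⟩
  ext j
  rcases eq_or_ne j i with rfl | hji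
  · simp; omega
  · rw [Finsupp.single_apply, if_neg (Ne.symm hji)]
    by_contra hj
    have hjmem : j ∈ d.support := Finsupp.mem_support_iff.mpr hj
    have hsub : ({i, j} : Finset σ) ⊆ d.support := by
      intro x hx
      simp only [Finset.mem_insert, Finset.mem_singleton] at hx
      rcases hx with rfl | rfl
      · exact hi
      · exact hjmem
    have h2 : d i + d j ≤ Finsupp.degree d := by
      rw [Finsupp.degree]
      calc d i + d j = ∑ x ∈ ({i, j} : Finset σ), d x := by
            rw [Finset.sum_pair (Ne.symm hji)]
        _ ≤ _ := Finset.sum_le_sum_of_subset hsub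
    omega

lemma eq_sum_of_isHomogeneous_one [Fintype σ] [DecidableEq σ] {p : MvPolynomial σ ℂ}
    (hp : p.IsHomogeneous 1) :
    p = ∑ i : σ, C (coeff (Finsupp.single i 1) p) * X i := by
  apply MvPolynomial.ext
  intro d
  rw [coeff_sum]
  simp_rw [coeff_C_mul, coeff_X']
  by_cases hd : Finsupp.degree d = 1
  · obtain ⟨i, rfl⟩ := single_of_degree_one hd
    rw [Finset.sum_eq_single i]
    · rw [if_pos rfl, mul_one]
    · intro j _ hji
      rw [if_neg (by simp [Finsupp.single_eq_single_iff, hji]), mul_zero]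
    · intro h; exact absurd (Finset.mem_univ i) h
  · rw [hp.coeff_eq_zero hd]
    apply (Finset.sum_eq_zero _).symm
    intro i _
    rw [if_neg, mul_zero]
    intro h
    rw [← h] at hd
    have : Finsupp.degree (Finsupp.single i 1) = 1 := by
      rw [Finsupp.degree_single]
    exact hd this

lemma exists_linear_coeffs {P m : ℕ} (f : Fin P → MvPolynomial σ ℂ)
    (hf : ∀ k, (f k).IsHomogeneous m) {p : MvPolynomial σ ℂ} (hp : p.IsHomogeneous (1 + m))
    (hmem : p ∈ Ideal.span (Set.range f)) :
    ∃ l : Fin P → MvPolynomial σ ℂ, (∀ k, (l k).IsHomogeneous 1) ∧ p = ∑ k, l k * f k := by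
  rw [Ideal.mem_span_range_iff_exists_fun] at hmem
  obtain ⟨h, hh⟩ := hmem
  refine ⟨fun k => homogeneousComponent 1 (h k),
    fun k => homogeneousComponent_isHomogeneous 1 _, ?_⟩
  calc p = homogeneousComponent (1 + m) p := by
        rw [homogeneousComponent_of_mem ((mem_homogeneousSubmodule _ _).mpr hp), if_pos rfl]
    _ = homogeneousComponent (1 + m) (∑ k, h k * f k) := by rw [hh]
    _ = ∑ k, homogeneousComponent (1 + m) (h k * f k) := map_sum _ _ _
    _ = ∑ k, homogeneousComponent 1 (h k) * f k :=
        Finset.sum_congr rfl fun k _ => homogeneousComponent_mul_of_isHomogeneous (hf k)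


lemma base1 (f₀ f₁ g : MvPolynomial (Fin 3) ℂ)
    (hf₀ : f₀.IsHomogeneous 1) (hf₁ : f₁.IsHomogeneous 1) (hg : g.IsHomogeneous 1)
    (hind : ∀ α β γ : ℂ, C α * f₀ + C β * f₁ + C γ * g = 0 → α = 0 ∧ β = 0 ∧ γ = 0)
    (a b : Fin 3 → MvPolynomial (Fin 3) ℂ)
    (hrel : ∀ j, X j * g = a j * f₀ + b j * f₁) : False := by
  set M : Matrix (Fin 3) (Fin 3) ℂ :=
    Matrix.of (fun r i => coeff (Finsupp.single i 1) (![g, f₀, f₁] r)) with hM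
  have hrows : LinearIndependent ℂ (fun r => M r) := by
    apply Fintype.linearIndependent_iff.mpr
    intro t ht
    have hq : C (t 1) * f₀ + C (t 2) * f₁ + C (t 0) * g = 0 := by
      set q := C (t 1) * f₀ + C (t 2) * f₁ + C (t 0) * g with hqdef
      have hqh : q.IsHomogeneous 1 := (((hf₀.C_mul _).add (hf₁.C_mul _)).add (hg.C_mul _))
      have hcoeff : ∀ i : Fin 3, coeff (Finsupp.single i 1) q = 0 := by
        intro i
        have h1 := congrFun ht i
        simp only [Fin.sum_univ_three, Pi.add_apply, Pi.smul_apply, smul_eq_mul,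
          Pi.zero_apply, hM, Matrix.of_apply, Matrix.cons_val_zero, Matrix.cons_val_one,
          Matrix.head_cons, Matrix.cons_val_two, Matrix.tail_cons] at h1
        rw [hqdef]
        simp only [coeff_add, coeff_C_mul]
        linear_combination h1
      rw [eq_sum_of_isHomogeneous_one hqh]
      apply Finset.sum_eq_zero
      intro i _
      rw [hcoeff i, map_zero, zero_mul]
    obtain ⟨h1, h2, h0⟩ := hind (t 1) (t 2) (t 0) hq
    intro i; fin_cases i <;> assumption
  have hMu : IsUnit M := Matrix.linearIndependent_rows_iff_isUnit.mp hrows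
  obtain ⟨v, hv⟩ := (Matrix.mulVec_surjective_iff_isUnit.mpr hMu) ![1, 0, 0]
  have heval : ∀ p : MvPolynomial (Fin 3) ℂ, p.IsHomogeneous 1 →
      eval v p = ∑ i, coeff (Finsupp.single i 1) p * v i := by
    intro p hp
    conv_lhs => rw [eq_sum_of_isHomogeneous_one hp]
    rw [map_sum]
    apply Finset.sum_congr rfl
    intro i _
    rw [eval_mul, eval_C, eval_X]
  have hvr : ∀ r : Fin 3, ∑ i, coeff (Finsupp.single i 1) (![g, f₀, f₁] r) * v i
      = ![(1:ℂ), 0, 0] r := by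
    intro r
    have := congrFun hv r
    rw [Matrix.mulVec] at this
    rw [← this]
    rfl
  have hvg : eval v g = 1 := by rw [heval g hg]; exact hvr 0
  have hvf₀ : eval v f₀ = 0 := by rw [heval f₀ hf₀]; exact hvr 1
  have hvf₁ : eval v f₁ = 0 := by rw [heval f₁ hf₁]; exact hvr 2
  have hvz : ∀ j, v j = 0 := by
    intro j
    have h := congrArg (eval v) (hrel j)
    rw [eval_mul, eval_X, eval_add, eval_mul, eval_mul, hvg, hvf₀, hvf₁] at h
    simpa using h
  rw [heval g hg] at hvg
  simp only [hvz, mul_zero, Finset.sum_const_zero] at hvg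
  exact zero_ne_one hvg



lemma core (m : ℕ) : 1 ≤ m → ∀ (f₀ f₁ g : MvPolynomial (Fin 3) ℂ)
    (a b : Fin 3 → MvPolynomial (Fin 3) ℂ),
    f₀.IsHomogeneous m → f₁.IsHomogeneous m → g.IsHomogeneous m →
    (∀ α β γ : ℂ, C α * f₀ + C β * f₁ + C γ * g = 0 → α = 0 ∧ β = 0 ∧ γ = 0) →
    (∀ j, (a j).IsHomogeneous 1) → (∀ j, (b j).IsHomogeneous 1) →
    (∀ j, X j * g = a j * f₀ + b j * f₁) → False := by
  induction m using Nat.strong_induction_on with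
  | _ m IH =>
  intro hm f₀ f₁ g a b hf₀ hf₁ hg hind ha hb hrel
  have hf₀ne : f₀ ≠ 0 := fun h => by
    have := (hind 1 0 0 (by rw [h]; simp)).1; norm_num at this
  have hf₁ne : f₁ ≠ 0 := fun h => by
    have := (hind 0 1 0 (by rw [h]; simp)).2.1; norm_num at this
  have hgne : g ≠ 0 := fun h => by
    have := (hind 0 0 1 (by rw [h]; simp)).2.2; norm_num at this
  rcases eq_or_lt_of_le hm with hm1 | hm2
  · exact base1 f₀ f₁ g (hm1 ▸ hf₀) (hm1 ▸ hf₁) (hm1 ▸ hg) hind a b hrel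
  -- now 2 ≤ m
  by_cases hcp : ∃ p : MvPolynomial (Fin 3) ℂ, Prime p ∧ p ∣ f₀ ∧ p ∣ f₁
  · -- common prime factor: divide it out and recurse
    obtain ⟨p, hp, hpf₀, hpf₁⟩ := hcp
    have hpne : p ≠ 0 := hp.ne_zero
    have hjex : ∃ j : Fin 3, ¬ p ∣ X j := by
      by_contra hcon
      push_neg at hcon
      obtain ⟨u, hu⟩ := hcon 0
      rcases (prime_X_c (0 : Fin 3)).irreducible.isUnit_or_isUnit hu with h | h
      · exact hp.not_unit h
      · obtain ⟨U, rfl⟩ := h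
        obtain ⟨w, hw⟩ := hcon 1
        have hX01 : (X 0 : MvPolynomial (Fin 3) ℂ) ∣ X 1 := by
          refine ⟨(↑U⁻¹ : MvPolynomial (Fin 3) ℂ) * w, ?_⟩
          rw [hw]
          have : p = X 0 * (↑U⁻¹ : MvPolynomial (Fin 3) ℂ) := by
            rw [hu, Units.mul_inv_cancel_right]
          rw [this]; ring
        exact not_X_dvd_X (show (1 : Fin 3) ≠ 0 by decide) hX01
    obtain ⟨j0, hj0⟩ := hjex
    have hpg : p ∣ g := by
      have hd : p ∣ X j0 * g := by
        rw [hrel j0]; exact dvd_add (hpf₀.mul_left _) (hpf₁.mul_left _)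
      exact (hp.2.2 _ _ hd).resolve_left hj0
    obtain ⟨q₀, hq₀⟩ := hpf₀
    obtain ⟨q₁, hq₁⟩ := hpf₁
    obtain ⟨w, hw⟩ := hpg
    have hq₀ne : q₀ ≠ 0 := fun h => hf₀ne (by rw [hq₀, h, mul_zero])
    have hq₁ne : q₁ ≠ 0 := fun h => hf₁ne (by rw [hq₁, h, mul_zero])
    have hwne : w ≠ 0 := fun h => hgne (by rw [hw, h, mul_zero])
    obtain ⟨dp, d0, hsum0, hpp, hq0h⟩ := isHomogeneous_of_mul (hq₀ ▸ hf₀) hpne hq₀ne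
    obtain ⟨dp', d1, hsum1, hpp', hq1h⟩ := isHomogeneous_of_mul (hq₁ ▸ hf₁) hpne hq₁ne
    obtain ⟨dp'', dw, hsumw, hpp'', hwh⟩ := isHomogeneous_of_mul (hw ▸ hg) hpne hwne
    have e1 : dp' = dp := hpp'.inj_right hpp hpne
    have e2 : dp'' = dp := hpp''.inj_right hpp hpne
    have hdp : 1 ≤ dp := by
      by_contra hcontra
      have hdp0 : dp = 0 := by omega
      have hpc := eq_C_of_isHomogeneous_zero (hdp0 ▸ hpp)
      have hcne : coeff 0 p ≠ 0 := fun h0 => hpne (by rw [hpc, h0, map_zero])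
      exact hp.not_unit (hpc ▸ isUnit_C' hcne)
    by_cases hd0 : d0 = 0
    · have hd1 : d1 = 0 := by omega
      have hq0C := eq_C_of_isHomogeneous_zero (hd0 ▸ hq0h)
      have hq1C := eq_C_of_isHomogeneous_zero (hd1 ▸ hq1h)
      have hcombo := hind (coeff 0 q₁) (-(coeff 0 q₀)) 0 (by
        rw [map_neg, map_zero]
        linear_combination C (coeff 0 q₁) * hq₀ - C (coeff 0 q₀) * hq₁ +
          p * C (coeff 0 q₁) * hq0C - p * C (coeff 0 q₀) * hq1C)
      exact hq₁ne (by rw [hq1C, hcombo.1, map_zero])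
    · have hd1e : d1 = d0 := by omega
      have hdwe : dw = d0 := by omega
      apply IH d0 (by omega) (by omega) q₀ q₁ w a b hq0h (hd1e ▸ hq1h) (hdwe ▸ hwh)
        ?_ ha hb ?_
      · intro α β γ hcomb
        apply hind α β γ
        rw [hq₀, hq₁, hw]
        linear_combination p * hcomb
      · intro j
        have hj := hrel j
        rw [hq₀, hq₁, hw] at hj
        apply mul_left_cancel₀ hpne
        linear_combination hj
  · -- no common prime factor
    push_neg at hcp
    have key : ∀ j k : Fin 3, (X k * a j - X j * a k) * f₀ = (X j * b k - X k * b j) * f₁ := by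
      intro j k
      linear_combination (X j) * hrel k - (X k) * hrel j
    have hdvd : ∀ j k : Fin 3, f₁ ∣ (X k * a j - X j * a k) := by
      intro j k
      apply UniqueFactorizationMonoid.dvd_of_dvd_mul_right_of_no_prime_factors hf₁ne
        (fun {d} hd1 hd0 hpr => hcp d hpr hd0 hd1)
      exact ⟨X j * b k - X k * b j, by linear_combination key j k⟩
    have hAhom : ∀ j k : Fin 3, (X k * a j - X j * a k).IsHomogeneous 2 := by
      intro j k
      have h1 : ((X k : MvPolynomial (Fin 3) ℂ) * a j).IsHomogeneous (1 + 1) :=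
        (isHomogeneous_X ℂ k).mul (ha j)
      have h2 : ((X j : MvPolynomial (Fin 3) ℂ) * a k).IsHomogeneous (1 + 1) :=
        (isHomogeneous_X ℂ j).mul (ha k)
      exact h1.sub h2
    have hC : ∀ j k : Fin 3, ∃ c : ℂ, (X k * a j - X j * a k) = C c * f₁ ∧
        (X j * b k - X k * b j) = C c * f₀ := by
      intro j k
      obtain ⟨u, hu⟩ := hdvd j k
      by_cases hA0 : (X k * a j - X j * a k) = 0
      · refine ⟨0, by simp [hA0], ?_⟩
        have hB : (X j * b k - X k * b j) * f₁ = 0 := by rw [← key j k, hA0, zero_mul]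
        rw [(mul_eq_zero.mp hB).resolve_right hf₁ne]
        simp
      · have hune : u ≠ 0 := fun h => hA0 (by rw [hu, h, mul_zero])
        obtain ⟨d1', du, hsum, hf1h', huh⟩ := isHomogeneous_of_mul (hu ▸ hAhom j k) hf₁ne hune
        have hd1m : d1' = m := hf1h'.inj_right hf₁ hf₁ne
        have hdu0 : du = 0 := by omega
        have huC := eq_C_of_isHomogeneous_zero (hdu0 ▸ huh)
        refine ⟨coeff 0 u, by rw [hu]; nth_rewrite 1 [huC]; ring, ?_⟩
        have hBid : (X j * b k - X k * b j) * f₁ = (C (coeff 0 u) * f₀) * f₁ := by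
          rw [← key j k, hu]
          nth_rewrite 1 [huC]
          ring
        exact mul_right_cancel₀ hf₁ne hBid
    choose c hc1 hc2 using hC
    by_cases hc0 : ∀ j k, c j k = 0
    · -- all brackets vanish
      have hXdvd : ∀ (aa : Fin 3 → MvPolynomial (Fin 3) ℂ), (∀ j, (aa j).IsHomogeneous 1) →
          (∀ j k, X k * aa j = X j * aa k) → ∃ μ : ℂ, ∀ j, aa j = C μ * X j := by
        intro aa haa hrel2
        have hnd : ¬ (X 0 : MvPolynomial (Fin 3) ℂ) ∣ X 1 :=
          not_X_dvd_X (show (1 : Fin 3) ≠ 0 by decide)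
        have h0 : (X 0 : MvPolynomial (Fin 3) ℂ) ∣ aa 0 :=
          ((prime_X_c (0 : Fin 3)).2.2 _ _ ⟨aa 1, hrel2 0 1⟩).resolve_left hnd
        obtain ⟨μ, hμ⟩ := linear_div (haa 0) h0
        refine ⟨μ, fun j => ?_⟩
        apply mul_left_cancel₀ (X_ne_zero (0 : Fin 3))
        rw [hrel2 j 0, hμ]
        ring
      have hAz : ∀ j k : Fin 3, X k * a j = X j * a k := by
        intro j k
        have h := hc1 j k
        rw [hc0 j k, map_zero, zero_mul] at h
        linear_combination h
      have hBz : ∀ j k : Fin 3, X k * b j = X j * b k := by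
        intro j k
        have h := hc2 j k
        rw [hc0 j k, map_zero, zero_mul] at h
        linear_combination -h
      obtain ⟨μ, hμ⟩ := hXdvd a ha hAz
      obtain ⟨ν, hν⟩ := hXdvd b hb hBz
      have h0 := hrel 0
      rw [hμ 0, hν 0] at h0
      have hgid : g = C μ * f₀ + C ν * f₁ :=
        mul_left_cancel₀ (X_ne_zero (0 : Fin 3)) (by linear_combination h0)
      have := (hind μ ν (-1) (by rw [map_neg, map_one]; linear_combination -hgid)).2.2
      norm_num at this
    · push_neg at hc0
      obtain ⟨j, k, hcjk⟩ := hc0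
      have hjk : j ≠ k := by
        rintro rfl
        apply hcjk
        have h0 : C (c j j) * f₁ = 0 := by rw [← hc1 j j]; ring
        exact C_eq_zero.mp ((mul_eq_zero.mp h0).resolve_right hf₁ne)
      obtain ⟨i, hij, hik⟩ : ∃ i : Fin 3, i ≠ j ∧ i ≠ k := by
        have : ∀ j k : Fin 3, j ≠ k → ∃ i, i ≠ j ∧ i ≠ k := by decide
        exact this j k hjk
      have hanti : ∀ u v : Fin 3, c v u = - c u v := by
        intro u v
        have h3 : (C (c v u) + C (c u v)) * f₁ = 0 := by
          linear_combination -hc1 u v - hc1 v u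
        have h4 := (mul_eq_zero.mp h3).resolve_right hf₁ne
        have h5 : c v u + c u v = 0 := by
          have := congrArg (coeff 0) h4
          simpa using this
        linear_combination h5
      have hckj : c k j ≠ 0 := by
        rw [hanti j k]
        simpa using hcjk
      have dance : ∀ (w0 u : MvPolynomial (Fin 3) ℂ) (γ1 γ2 : ℂ) (jj kk ii : Fin 3),
          ii ≠ jj → ii ≠ kk → γ1 ≠ 0 →
          (C γ1 * X ii - C γ2 * X kk) * u = X jj * w0 →
          (X jj : MvPolynomial (Fin 3) ℂ) ∣ u := by
        intro w0 u γ1 γ2 jj kk ii hiijj hiikk hγ1 heq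
        have hdd : (X jj : MvPolynomial (Fin 3) ℂ) ∣ (C γ1 * X ii - C γ2 * X kk) * u :=
          ⟨w0, heq⟩
        rcases (prime_X_c jj).2.2 _ _ hdd with h | h
        · exfalso
          apply not_X_dvd hiijj hiikk hγ1 (i := ii) (k := kk) (β := -γ2)
          rw [map_neg]
          convert h using 1
          ring
        · exact h
      have hXj_aj : (X j : MvPolynomial (Fin 3) ℂ) ∣ a j := by
        apply dance (C (c j k) * a i - C (c j i) * a k) (a j) (c j k) (c j i) j k i hij hik hcjk
        linear_combination C (c j k) * hc1 j i - C (c j i) * hc1 j k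
      have hXk_ak : (X k : MvPolynomial (Fin 3) ℂ) ∣ a k := by
        apply dance (C (c k j) * a i - C (c k i) * a j) (a k) (c k j) (c k i) k j i hik hij hckj
        linear_combination C (c k j) * hc1 k i - C (c k i) * hc1 k j
      have hXj_bj : (X j : MvPolynomial (Fin 3) ℂ) ∣ b j := by
        apply dance (C (c j k) * b i - C (c j i) * b k) (b j) (c j k) (c j i) j k i hij hik hcjk
        linear_combination C (c j i) * hc2 j k - C (c j k) * hc2 j i
      have hXk_bk : (X k : MvPolynomial (Fin 3) ℂ) ∣ b k := by
        apply dance (C (c k j) * b i - C (c k i) * b j) (b k) (c k j) (c k i) k j i hik hij hckj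
        linear_combination C (c k i) * hc2 k j - C (c k j) * hc2 k i
      obtain ⟨α₁, hα₁⟩ := linear_div (ha j) hXj_aj
      obtain ⟨α₂, hα₂⟩ := linear_div (ha k) hXk_ak
      obtain ⟨β₁, hβ₁⟩ := linear_div (hb j) hXj_bj
      obtain ⟨β₂, hβ₂⟩ := linear_div (hb k) hXk_bk
      have hf₁eq : C (c j k) * f₁ = C (α₁ - α₂) * (X j * X k) := by
        have h := hc1 j k
        rw [hα₁, hα₂] at h
        rw [map_sub]
        linear_combination -h
      have hf₀eq : C (c j k) * f₀ = C (β₂ - β₁) * (X j * X k) := by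
        have h := hc2 j k
        rw [hβ₁, hβ₂] at h
        rw [map_sub]
        linear_combination -h
      have hCcne : (C (c j k) : MvPolynomial (Fin 3) ℂ) ≠ 0 :=
        fun h => hcjk (C_eq_zero.mp h)
      have hzero : C (α₁ - α₂) * f₀ + C (-(β₂ - β₁)) * f₁ + C 0 * g = 0 := by
        rw [map_neg, map_zero]
        apply mul_left_cancel₀ hCcne
        linear_combination C (α₁ - α₂) * hf₀eq - C (β₂ - β₁) * hf₁eq
      have h2 := hind _ _ _ hzero
      apply hf₁ne
      have hf10 : C (c j k) * f₁ = 0 := by rw [hf₁eq, h2.1, map_zero, zero_mul]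
      exact (mul_eq_zero.mp hf10).resolve_left hCcne


lemma caseP0 {n : ℕ} (j : Fin n) {f : Fin 0 → MvPolynomial (Fin n) ℂ}
    {g : MvPolynomial (Fin n) ℂ} (hg : g ≠ 0)
    (h : X j * g ∈ Ideal.span (Set.range f)) : False := by
  rw [Set.range_eq_empty f, Ideal.span_empty, Ideal.mem_bot] at h
  rcases mul_eq_zero.mp h with h | h
  · exact X_ne_zero j h
  · exact hg h

lemma caseP1 {σ : Type*} [DecidableEq σ] {j₀ j₁ : σ} (hne : j₁ ≠ j₀)
    {f0 g a₀ a₁ : MvPolynomial σ ℂ}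
    (hf0ne : f0 ≠ 0) (ha₀ : a₀.IsHomogeneous 1)
    (hg : ∀ μ : ℂ, g ≠ C μ * f0)
    (h₀ : X j₀ * g = a₀ * f0) (h₁ : X j₁ * g = a₁ * f0) : False := by
  have hkey : (X j₁ * a₀ - X j₀ * a₁) * f0 = 0 := by linear_combination X j₀ * h₁ - X j₁ * h₀
  have h0 : X j₁ * a₀ = X j₀ * a₁ := by
    have h := (mul_eq_zero.mp hkey).resolve_right hf0ne
    linear_combination h
  have hdvd : (X j₀ : MvPolynomial σ ℂ) ∣ a₀ :=
    ((prime_X_c j₀).2.2 _ _ ⟨a₁, h0⟩).resolve_left (not_X_dvd_X hne)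
  obtain ⟨μ, hμ⟩ := linear_div ha₀ hdvd
  apply hg μ
  apply mul_left_cancel₀ (X_ne_zero j₀)
  rw [h₀, hμ]
  ring

end
end AlgSig

open AlgSig

/-- algebraic form, `n ≤ 3`. If `f₁,…,f_P, g` are homogeneous of degree
`m` in `ℂ[z₁,…,zₙ]`, linearly independent, and `z_j·g ∈ ⟨f₁,…,f_P⟩` for all `j`
(i.e. `⟨g⟩_{m+1} ⊆ ⟨f₁,…,f_P⟩_{m+1}`), then `n ≤ 3` implies `P ≥ n`. -/
theorem alg_sig_P1_n_le_three (n m P : ℕ) (hn : n ≤ 3) (hm : 1 ≤ m)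
    (f : Fin P → MvPolynomial (Fin n) ℂ) (g : MvPolynomial (Fin n) ℂ)
    (hf : ∀ k, (f k).IsHomogeneous m) (hg : g.IsHomogeneous m)
    (hlin : LinearIndependent ℂ (Fin.snoc f g : Fin (P + 1) → MvPolynomial (Fin n) ℂ))
    (hcontain : ∀ j : Fin n, X j * g ∈ Ideal.span (Set.range f)) : n ≤ P := by
  by_contra hP
  push_neg at hP
  have hgne : g ≠ 0 := by
    have h := hlin.ne_zero (Fin.last P)
    simpa using h
  -- extract degree-(m+1) relations with linear coefficients
  have hext := fun j => exists_linear_coeffs f hf ((isHomogeneous_X ℂ j).mul hg) (hcontain j)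
  choose l hl hsum using hext
  interval_cases n
  · omega
  · -- n = 1
    interval_cases P
    · exact caseP0 0 hgne (hcontain 0)
  · -- n = 2
    interval_cases P
    · exact caseP0 0 hgne (hcontain 0)
    · -- P = 1
      have hf0ne : f 0 ≠ 0 := by
        have h := hlin.ne_zero (Fin.castSucc 0)
        rwa [Fin.snoc_castSucc] at h
      have hgns : ∀ μ : ℂ, g ≠ C μ * f 0 := by
        intro μ hgf
        have h2 := Fintype.linearIndependent_iff.mp hlin ![μ, -1] (by
          rw [Fin.sum_univ_two]
          have e0 : (Fin.snoc f g : Fin 2 → MvPolynomial (Fin 2) ℂ) 0 = f 0 := by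
            rw [show (0 : Fin 2) = Fin.castSucc 0 from rfl, Fin.snoc_castSucc]
          have e1 : (Fin.snoc f g : Fin 2 → MvPolynomial (Fin 2) ℂ) 1 = g := by
            rw [show (1 : Fin 2) = Fin.last 1 from rfl, Fin.snoc_last]
          rw [e0, e1]
          simp only [Matrix.cons_val_zero, Matrix.cons_val_one, Matrix.head_cons,
            smul_eq_C_mul, map_neg, map_one]
          linear_combination -hgf)
        have := h2 1
        norm_num at this
      have hrel : ∀ j : Fin 2, X j * g = l j 0 * f 0 := by
        intro j
        rw [hsum j, Fin.sum_univ_one]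
      exact caseP1 (show (1 : Fin 2) ≠ 0 by decide) hf0ne (hl 0 0) hgns (hrel 0) (hrel 1)
  · -- n = 3
    interval_cases P
    · exact caseP0 0 hgne (hcontain 0)
    · -- P = 1
      have hf0ne : f 0 ≠ 0 := by
        have h := hlin.ne_zero (Fin.castSucc 0)
        rwa [Fin.snoc_castSucc] at h
      have hgns : ∀ μ : ℂ, g ≠ C μ * f 0 := by
        intro μ hgf
        have h2 := Fintype.linearIndependent_iff.mp hlin ![μ, -1] (by
          rw [Fin.sum_univ_two]
          have e0 : (Fin.snoc f g : Fin 2 → MvPolynomial (Fin 3) ℂ) 0 = f 0 := by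
            rw [show (0 : Fin 2) = Fin.castSucc 0 from rfl, Fin.snoc_castSucc]
          have e1 : (Fin.snoc f g : Fin 2 → MvPolynomial (Fin 3) ℂ) 1 = g := by
            rw [show (1 : Fin 2) = Fin.last 1 from rfl, Fin.snoc_last]
          rw [e0, e1]
          simp only [Matrix.cons_val_zero, Matrix.cons_val_one, Matrix.head_cons,
            smul_eq_C_mul, map_neg, map_one]
          linear_combination -hgf)
        have := h2 1
        norm_num at this
      have hrel : ∀ j : Fin 3, X j * g = l j 0 * f 0 := by
        intro j
        rw [hsum j, Fin.sum_univ_one]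
      exact caseP1 (show (1 : Fin 3) ≠ 0 by decide) hf0ne (hl 0 0) hgns (hrel 0) (hrel 1)
    · -- P = 2 : the main case
      have e0 : (Fin.snoc f g : Fin 3 → MvPolynomial (Fin 3) ℂ) 0 = f 0 := by
        rw [show (0 : Fin 3) = Fin.castSucc 0 from rfl, Fin.snoc_castSucc]
      have e1 : (Fin.snoc f g : Fin 3 → MvPolynomial (Fin 3) ℂ) 1 = f 1 := by
        rw [show (1 : Fin 3) = Fin.castSucc 1 from rfl, Fin.snoc_castSucc]
      have e2 : (Fin.snoc f g : Fin 3 → MvPolynomial (Fin 3) ℂ) 2 = g := by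
        rw [show (2 : Fin 3) = Fin.last 2 from rfl, Fin.snoc_last]
      have hind : ∀ α β γ : ℂ, C α * f 0 + C β * f 1 + C γ * g = 0 →
          α = 0 ∧ β = 0 ∧ γ = 0 := by
        intro α β γ hzero
        have h2 := Fintype.linearIndependent_iff.mp hlin ![α, β, γ] (by
          rw [Fin.sum_univ_three, e0, e1, e2]
          simp only [Matrix.cons_val_zero, Matrix.cons_val_one, Matrix.head_cons,
            Matrix.cons_val_two, Matrix.tail_cons, smul_eq_C_mul]
          linear_combination hzero)
        exact ⟨h2 0, h2 1, h2 2⟩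
      have hrel : ∀ j : Fin 3, X j * g = l j 0 * f 0 + l j 1 * f 1 := by
        intro j
        rw [hsum j, Fin.sum_univ_two]
      exact core m hm (f 0) (f 1) g (fun j => l j 0) (fun j => l j 1)
        (hf 0) (hf 1) hg hind (fun j => hl j 0) (fun j => hl j 1) hrel
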